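/- Let A = K[[f_1,…,f_s]] ⊆ F = K[[x_1,…,x_n]] with the length of F/A as an A-module finite, let a ∈ (ℝ_{>0})^n, and let {g_1,…,g_r} be an a-reduced canonical basis of A. Then in(A,a) is multihomogeneous (i.e., generated as a closed K-subalgebra by monomials) if and only if in(g_i,a) is a monomial for every i ∈ {1,…,r}. -/

import Mathlib

noncomputable section

namespace CanonicalFan

open MvPowerSeries

variable (K : Type*) [Field K] (n : ℕ)

/-- The weight `⟨a, α⟩ = ∑ i, a i * α i` of an exponent `α` with respect to `a`. -/
def weight (a : Fin n → ℝ) (α : Fin n →₀ ℕ) : ℝ := ∑ i, a i * (α i : ℝ)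

/-- The support of a formal power series. -/
def supp (f : MvPowerSeries (Fin n) K) : Set (Fin n →₀ ℕ) :=
  {α | MvPowerSeries.coeff α f ≠ 0}

/-- The `a`-valuation `ν(f,a)`, with the convention `ν(0,a) = +∞`. -/
def nu (a : Fin n → ℝ) (f : MvPowerSeries (Fin n) K) : EReal :=
  sInf ((fun α => ((weight n a α : ℝ) : EReal)) '' supp K n f)

open Classical in
/-- The `a`-initial form `in(f,a)` of a power series. -/
def initialForm (a : Fin n → ℝ) (f : MvPowerSeries (Fin n) K) :
    MvPowerSeries (Fin n) K :=
  fun α => if ((weight n a α : ℝ) : EReal) = nu K n a f then MvPowerSeries.coeff α f else 0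

open Classical in
/-- `exp(f,a)`: the `≺`-maximal element of the support of `in(f,a)`, where `≺` is the
well-ordering `r` (junk value `0` if no maximal element exists). -/
def exponent (r : (Fin n →₀ ℕ) → (Fin n →₀ ℕ) → Prop) (a : Fin n → ℝ)
    (f : MvPowerSeries (Fin n) K) : Fin n →₀ ℕ :=
  if h : ∃ β ∈ supp K n (initialForm K n a f),
      ∀ γ ∈ supp K n (initialForm K n a f), γ = β ∨ r γ β
  then h.choose else 0

/-- The `a`-leading monomial `M(f,a) = c_{exp(f,a)} x^{exp(f,a)}`. -/
def leadMon (r : (Fin n →₀ ℕ) → (Fin n →₀ ℕ) → Prop) (a : Fin n → ℝ)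
    (f : MvPowerSeries (Fin n) K) : MvPowerSeries (Fin n) K :=
  MvPowerSeries.monomial (exponent K n r a f)
    (MvPowerSeries.coeff (exponent K n r a f) f)

/-- The maximal ideal `(x_1, …, x_n)` of `K[[x_1,…,x_n]]`. -/
def mIdeal : Ideal (MvPowerSeries (Fin n) K) :=
  Ideal.span (Set.range (MvPowerSeries.X : Fin n → MvPowerSeries (Fin n) K))

/-- `K[[S]]`: the smallest `K`-subalgebra of `K[[x_1,…,x_n]]` containing `S` and closed in
the `(x_1,…,x_n)`-adic topology; concretely, the adic closure of `Algebra.adjoin K S`. -/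
def closedAdjoin (S : Set (MvPowerSeries (Fin n) K)) :
    Subalgebra K (MvPowerSeries (Fin n) K) where
  carrier := {f | ∀ N : ℕ, ∃ g ∈ Algebra.adjoin K S, f - g ∈ (mIdeal K n) ^ N}
  algebraMap_mem' c N :=
    ⟨algebraMap K _ c, Subalgebra.algebraMap_mem _ c, by simp [Ideal.zero_mem]⟩
  add_mem' {f g} hf hg N := by
    obtain ⟨p, hp, hfp⟩ := hf N
    obtain ⟨q, hq, hgq⟩ := hg N
    exact ⟨p + q, add_mem hp hq, by simpa [add_sub_add_comm] using Ideal.add_mem _ hfp hgq⟩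
  mul_mem' {f g} hf hg N := by
    obtain ⟨p, hp, hfp⟩ := hf N
    obtain ⟨q, hq, hgq⟩ := hg N
    refine ⟨p * q, mul_mem hp hq, ?_⟩
    have h : f * g - p * q = f * (g - q) + (f - p) * q := by ring
    rw [h]
    exact Ideal.add_mem _ (Ideal.mul_mem_left _ _ hgq) (Ideal.mul_mem_right _ _ hfp)

/-- `exp(A,a) = {exp(f,a) : f ∈ A, f ≠ 0}`. -/
def expSet (r : (Fin n →₀ ℕ) → (Fin n →₀ ℕ) → Prop) (a : Fin n → ℝ)
    (A : Set (MvPowerSeries (Fin n) K)) : Set (Fin n →₀ ℕ) :=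
  {β | ∃ f ∈ A, f ≠ 0 ∧ exponent K n r a f = β}

/-- `in(A,a) = K[[in(f,a) : f ∈ A ∖ {0}]]`. -/
def inAlgebra (a : Fin n → ℝ) (A : Set (MvPowerSeries (Fin n) K)) :
    Subalgebra K (MvPowerSeries (Fin n) K) :=
  closedAdjoin K n {g | ∃ f ∈ A, f ≠ 0 ∧ initialForm K n a f = g}

/-- `M(A,a) = K[[M(f,a) : f ∈ A ∖ {0}]]`. -/
def leadAlgebra (r : (Fin n →₀ ℕ) → (Fin n →₀ ℕ) → Prop) (a : Fin n → ℝ)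
    (A : Set (MvPowerSeries (Fin n) K)) : Subalgebra K (MvPowerSeries (Fin n) K) :=
  closedAdjoin K n {g | ∃ f ∈ A, f ≠ 0 ∧ leadMon K n r a f = g}

set_option synthInstance.maxHeartbeats 1000000 in
/-- The length of `F/A` as an `A`-module is finite. -/
def FiniteColength (A : Subalgebra K (MvPowerSeries (Fin n) K)) : Prop :=
  IsFiniteLength A
    (MvPowerSeries (Fin n) K ⧸ LinearMap.range (Algebra.linearMap A (MvPowerSeries (Fin n) K)))

/-- `{g_1,…,g_r}` is an `a`-canonical basis of `A`. -/
def IsCanonicalBasis (r : (Fin n →₀ ℕ) → (Fin n →₀ ℕ) → Prop) (a : Fin n → ℝ)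
    (A : Subalgebra K (MvPowerSeries (Fin n) K)) {m : ℕ}
    (g : Fin m → MvPowerSeries (Fin n) K) : Prop :=
  (∀ i, g i ∈ A ∧ g i ≠ 0) ∧
    leadAlgebra K n r a (A : Set (MvPowerSeries (Fin n) K)) =
      closedAdjoin K n (Set.range fun i => leadMon K n r a (g i))

/-- `{g_1,…,g_r}` is a minimal `a`-canonical basis of `A`. -/
def IsMinimalCanonicalBasis (r : (Fin n →₀ ℕ) → (Fin n →₀ ℕ) → Prop) (a : Fin n → ℝ)
    (A : Subalgebra K (MvPowerSeries (Fin n) K)) {m : ℕ}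
    (g : Fin m → MvPowerSeries (Fin n) K) : Prop :=
  IsCanonicalBasis K n r a A g ∧
    ∀ T : Set (MvPowerSeries (Fin n) K),
      T ⊂ Set.range (fun i => leadMon K n r a (g i)) →
        closedAdjoin K n T ≠ leadAlgebra K n r a (A : Set (MvPowerSeries (Fin n) K))

/-- `{g_1,…,g_r}` is the `a`-reduced canonical basis of `A`. -/
def IsReducedCanonicalBasis (r : (Fin n →₀ ℕ) → (Fin n →₀ ℕ) → Prop) (a : Fin n → ℝ)
    (A : Subalgebra K (MvPowerSeries (Fin n) K)) {m : ℕ}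
    (g : Fin m → MvPowerSeries (Fin n) K) : Prop :=
  IsMinimalCanonicalBasis K n r a A g ∧
    (∀ i, MvPowerSeries.coeff (exponent K n r a (g i)) (g i) = 1) ∧
    ∀ i, ∀ α ∈ supp K n (g i - leadMon K n r a (g i)),
      (MvPowerSeries.monomial α (1 : K)) ∉
        closedAdjoin K n (Set.range fun j => leadMon K n r a (g j))

/-- A power series is a (nonzero) monomial. -/
def IsMonomial (g : MvPowerSeries (Fin n) K) : Prop :=
  ∃ (α : Fin n →₀ ℕ) (c : K), c ≠ 0 ∧ g = MvPowerSeries.monomial α c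

/- AUXILIARY DEVELOPMENT -/

section Aux

variable {K : Type*} [Field K] {n : ℕ} {a : Fin n → ℝ}
  {r : (Fin n →₀ ℕ) → (Fin n →₀ ℕ) → Prop}

lemma weight_add (α β : Fin n →₀ ℕ) :
    weight n a (α + β) = weight n a α + weight n a β := by
  simp [weight, Finsupp.add_apply, mul_add, Finset.sum_add_distrib]

lemma weight_zero : weight n a (0 : Fin n →₀ ℕ) = 0 := by simp [weight]

lemma weight_nonneg (ha : ∀ i, 0 < a i) (α : Fin n →₀ ℕ) : 0 ≤ weight n a α :=
  Finset.sum_nonneg fun i _ => mul_nonneg (ha i).le (Nat.cast_nonneg _)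

lemma finite_weight_le (ha : ∀ i, 0 < a i) (C : ℝ) :
    {α : Fin n →₀ ℕ | weight n a α ≤ C}.Finite := by
  classical
  set b : Fin n → ℕ := fun i => ⌈C / a i⌉₊ with hb
  have hsub : {α : Fin n →₀ ℕ | weight n a α ≤ C} ⊆
      (fun α : Fin n →₀ ℕ => (α : Fin n → ℕ)) ⁻¹'
        (Set.univ.pi fun i => Set.Iic (b i)) := by
    intro α hα i _
    have h1 : a i * (α i : ℝ) ≤ weight n a α := by
      refine Finset.single_le_sum (f := fun j => a j * (α j : ℝ)) ?_ (Finset.mem_univ i)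
      intro j _; exact mul_nonneg (ha j).le (Nat.cast_nonneg _)
    have h2 : (α i : ℝ) ≤ C / a i := by
      rw [le_div_iff₀ (ha i)]
      linarith [Set.mem_setOf_eq ▸ hα]
    have h3 : (α i : ℝ) ≤ (b i : ℝ) := h2.trans (Nat.le_ceil _)
    exact_mod_cast h3
  refine Set.Finite.subset ?_ hsub
  refine Set.Finite.preimage ?_ ?_
  · exact Function.Injective.injOn (DFunLike.coe_injective)
  · exact Set.Finite.pi fun i => Set.finite_Iic _

/-- Characterization of the (real) value of `nu`. -/
def NuIs (a : Fin n → ℝ) (v : ℝ) (f : MvPowerSeries (Fin n) K) : Prop :=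
  (∃ α ∈ supp K n f, weight n a α = v) ∧ ∀ α ∈ supp K n f, v ≤ weight n a α

lemma nuIs_exists (ha : ∀ i, 0 < a i) {f : MvPowerSeries (Fin n) K} (hf : f ≠ 0) :
    ∃ v : ℝ, NuIs a v f := by
  classical
  obtain ⟨α₀, hα₀⟩ := (MvPowerSeries.ne_zero_iff_exists_coeff_ne_zero f).mp hf
  have hfin : ({α ∈ supp K n f | weight n a α ≤ weight n a α₀} : Set _).Finite :=
    (finite_weight_le ha (weight n a α₀)).subset fun α hα => hα.2
  have hne : α₀ ∈ hfin.toFinset := by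
    simp only [Set.Finite.mem_toFinset, Set.mem_setOf_eq]
    exact ⟨hα₀, le_refl _⟩
  obtain ⟨β, hβmem, hβ⟩ := Finset.exists_min_image hfin.toFinset (weight n a) ⟨α₀, hne⟩
  simp only [Set.Finite.mem_toFinset, Set.mem_setOf_eq] at hβmem
  refine ⟨weight n a β, ⟨β, hβmem.1, rfl⟩, ?_⟩
  intro α hα
  by_cases hcase : weight n a α ≤ weight n a α₀
  · exact hβ α (by simp only [Set.Finite.mem_toFinset, Set.mem_setOf_eq]; exact ⟨hα, hcase⟩)
  · have := hβ α₀ hne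
    push_neg at hcase
    linarith

lemma NuIs.nu_eq {v : ℝ} {f : MvPowerSeries (Fin n) K} (h : NuIs a v f) :
    nu K n a f = (v : EReal) := by
  obtain ⟨⟨α, hα, hw⟩, hlb⟩ := h
  refine le_antisymm ?_ ?_
  · exact sInf_le ⟨α, hα, by simp only []; rw [hw]⟩
  · refine le_sInf ?_
    rintro x ⟨β, hβ, rfl⟩
    simp only []
    exact_mod_cast hlb β hβ

lemma NuIs.unique {v v' : ℝ} {f : MvPowerSeries (Fin n) K}
    (h : NuIs a v f) (h' : NuIs a v' f) : v = v' := by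
  obtain ⟨⟨α, hα, hw⟩, hlb⟩ := h
  obtain ⟨⟨β, hβ, hw'⟩, hlb'⟩ := h'
  have := hlb β hβ
  have := hlb' α hα
  linarith

lemma coeff_initialForm {v : ℝ} {f : MvPowerSeries (Fin n) K} (h : NuIs a v f)
    (γ : Fin n →₀ ℕ) :
    MvPowerSeries.coeff γ (initialForm K n a f) =
      if weight n a γ = v then MvPowerSeries.coeff γ f else 0 := by
  have hrw : MvPowerSeries.coeff γ (initialForm K n a f) =
      if ((weight n a γ : ℝ) : EReal) = nu K n a f then MvPowerSeries.coeff γ f else 0 := rfl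
  rw [hrw, h.nu_eq]
  have : ((weight n a γ : ℝ) : EReal) = (v : EReal) ↔ weight n a γ = v := EReal.coe_eq_coe_iff
  exact if_congr this rfl rfl

lemma mem_supp_initialForm {v : ℝ} {f : MvPowerSeries (Fin n) K} (h : NuIs a v f)
    {γ : Fin n →₀ ℕ} :
    γ ∈ supp K n (initialForm K n a f) ↔ γ ∈ supp K n f ∧ weight n a γ = v := by
  simp only [supp, Set.mem_setOf_eq, coeff_initialForm h]
  by_cases hw : weight n a γ = v <;> simp [hw]


end Aux

section Aux2

variable {K : Type*} [Field K] {n : ℕ} {a : Fin n → ℝ}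
  {r : (Fin n →₀ ℕ) → (Fin n →₀ ℕ) → Prop}

lemma exists_rmax (hr : IsWellOrder (Fin n →₀ ℕ) r) (t : Finset (Fin n →₀ ℕ))
    (hne : t.Nonempty) : ∃ b ∈ t, ∀ c ∈ t, c = b ∨ r c b := by
  classical
  induction t using Finset.induction_on with
  | empty => exact absurd hne (by simp)
  | insert x t' hnotmem ih =>
    rcases t'.eq_empty_or_nonempty with h0 | h0
    · subst h0
      exact ⟨x, Finset.mem_insert_self _ _, fun c hc => Or.inl (by simpa using hc)⟩
    · obtain ⟨b, hb, hmax⟩ := ih h0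
      rcases trichotomous_of r x b with hxb | hxb | hxb
      · refine ⟨b, Finset.mem_insert_of_mem hb, ?_⟩
        intro c hc
        rcases Finset.mem_insert.mp hc with rfl | hc
        · exact Or.inr hxb
        · exact hmax c hc
      · subst hxb
        exact ⟨x, Finset.mem_insert_self _ _, fun c hc =>
          (Finset.mem_insert.mp hc).imp id (fun h => (hmax c h).resolve_left (by
            rintro rfl; exact absurd h hnotmem) )⟩
      · refine ⟨x, Finset.mem_insert_self _ _, ?_⟩
        intro c hc
        rcases Finset.mem_insert.mp hc with rfl | hc
        · exact Or.inl rfl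
        · rcases hmax c hc with rfl | hcb
          · exact Or.inr hxb
          · exact Or.inr ((by haveI := hr; exact _root_.trans_of r hcb hxb))

lemma supp_initialForm_finite (ha : ∀ i, 0 < a i) {v : ℝ} {f : MvPowerSeries (Fin n) K}
    (h : NuIs a v f) : (supp K n (initialForm K n a f)).Finite := by
  refine (finite_weight_le ha v).subset ?_
  intro γ hγ
  exact le_of_eq ((mem_supp_initialForm h).mp hγ).2

lemma exponent_spec (hr : IsWellOrder (Fin n →₀ ℕ) r) (ha : ∀ i, 0 < a i)
    {f : MvPowerSeries (Fin n) K} (hf : f ≠ 0) :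
    exponent K n r a f ∈ supp K n (initialForm K n a f) ∧
      ∀ γ ∈ supp K n (initialForm K n a f), γ = exponent K n r a f ∨ r γ (exponent K n r a f) := by
  obtain ⟨v, hv⟩ := nuIs_exists ha hf
  have hfin := supp_initialForm_finite ha hv
  have hne : (supp K n (initialForm K n a f)).Nonempty := by
    obtain ⟨α, hα, hw⟩ := hv.1
    exact ⟨α, (mem_supp_initialForm hv).mpr ⟨hα, hw⟩⟩
  have hP : ∃ β ∈ supp K n (initialForm K n a f),
      ∀ γ ∈ supp K n (initialForm K n a f), γ = β ∨ r γ β := by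
    obtain ⟨b, hb, hmax⟩ := exists_rmax hr hfin.toFinset
      (by rwa [Set.Finite.toFinset_nonempty])
    exact ⟨b, hfin.mem_toFinset.mp hb, fun γ hγ => hmax γ (hfin.mem_toFinset.mpr hγ)⟩
  have : exponent K n r a f = hP.choose := by rw [exponent, dif_pos hP]
  rw [this]
  exact hP.choose_spec

lemma exponent_unique (hr : IsWellOrder (Fin n →₀ ℕ) r)
    {f : MvPowerSeries (Fin n) K} {β : Fin n →₀ ℕ}
    (h1 : β ∈ supp K n (initialForm K n a f))
    (h2 : ∀ γ ∈ supp K n (initialForm K n a f), γ = β ∨ r γ β) :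
    exponent K n r a f = β := by
  have hP : ∃ β' ∈ supp K n (initialForm K n a f),
      ∀ γ ∈ supp K n (initialForm K n a f), γ = β' ∨ r γ β' := ⟨β, h1, h2⟩
  have heq : exponent K n r a f = hP.choose := by rw [exponent, dif_pos hP]
  obtain ⟨hmem, hmax⟩ := hP.choose_spec
  rw [heq]
  rcases hmax β h1 with h | h
  · exact h.symm
  · rcases h2 _ hmem with h' | h'
    · exact h'
    · exact absurd h (hr.wf.asymmetric _ _ h')

lemma exponent_mem (hr : IsWellOrder (Fin n →₀ ℕ) r) (ha : ∀ i, 0 < a i)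
    {v : ℝ} {f : MvPowerSeries (Fin n) K} (hf : f ≠ 0) (hv : NuIs a v f) :
    MvPowerSeries.coeff (exponent K n r a f) f ≠ 0 ∧
      weight n a (exponent K n r a f) = v := by
  have h := (exponent_spec hr ha hf).1
  rw [mem_supp_initialForm hv] at h
  exact ⟨h.1, h.2⟩

lemma initialForm_eq_monomial_of_supp_unique {v : ℝ} {f : MvPowerSeries (Fin n) K}
    (hv : NuIs a v f) {β : Fin n →₀ ℕ}
    (h : ∀ γ ∈ supp K n (initialForm K n a f), γ = β) :
    initialForm K n a f = MvPowerSeries.monomial β (MvPowerSeries.coeff β f) := by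
  have hβmem : β ∈ supp K n (initialForm K n a f) := by
    obtain ⟨α, hα, hw⟩ := hv.1
    have hαm : α ∈ supp K n (initialForm K n a f) := (mem_supp_initialForm hv).mpr ⟨hα, hw⟩
    rwa [h α hαm] at hαm
  have hβw : weight n a β = v := ((mem_supp_initialForm hv).mp hβmem).2
  ext γ
  rw [MvPowerSeries.coeff_monomial, coeff_initialForm hv]
  by_cases hγβ : γ = β
  · subst hγβ
    rw [if_pos rfl, if_pos hβw]
  · rw [if_neg hγβ]
    by_cases hw : weight n a γ = v
    · rw [if_pos hw]
      by_contra hne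
      exact hγβ (h γ ((mem_supp_initialForm hv).mpr ⟨hne, hw⟩))
    · rw [if_neg hw]

lemma exponent_eq_of_initialForm_monomial (hr : IsWellOrder (Fin n →₀ ℕ) r)
    {f : MvPowerSeries (Fin n) K} {β : Fin n →₀ ℕ} {c : K} (hc : c ≠ 0)
    (h : initialForm K n a f = MvPowerSeries.monomial β c) :
    exponent K n r a f = β := by
  refine exponent_unique hr ?_ ?_
  · simp only [supp, Set.mem_setOf_eq, h, MvPowerSeries.coeff_monomial_same]
    exact hc
  · intro γ hγ
    simp only [supp, Set.mem_setOf_eq, h] at hγ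
    exact Or.inl (MvPowerSeries.eq_of_coeff_monomial_ne_zero hγ)

end Aux2

section Aux3

variable {K : Type*} [Field K] {n : ℕ} {a : Fin n → ℝ}
  {r : (Fin n →₀ ℕ) → (Fin n →₀ ℕ) → Prop}

lemma coeff_mul_eq_zero_of {p q : MvPowerSeries (Fin n) K} {α : Fin n →₀ ℕ}
    (h : ∀ β γ : Fin n →₀ ℕ, β + γ = α →
      MvPowerSeries.coeff β p = 0 ∨ MvPowerSeries.coeff γ q = 0) :
    MvPowerSeries.coeff α (p * q) = 0 := by
  classical
  rw [MvPowerSeries.coeff_mul]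
  refine Finset.sum_eq_zero ?_
  intro x hx
  rcases h x.1 x.2 (Finset.HasAntidiagonal.mem_antidiagonal.mp hx) with h0 | h0 <;> simp [h0]

lemma exists_decomp_of_coeff_mul_ne_zero {p q : MvPowerSeries (Fin n) K} {α : Fin n →₀ ℕ}
    (h : MvPowerSeries.coeff α (p * q) ≠ 0) :
    ∃ β γ : Fin n →₀ ℕ, β + γ = α ∧
      MvPowerSeries.coeff β p ≠ 0 ∧ MvPowerSeries.coeff γ q ≠ 0 := by
  classical
  rw [MvPowerSeries.coeff_mul] at h
  obtain ⟨x, hx, hne⟩ := Finset.exists_ne_zero_of_sum_ne_zero h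
  exact ⟨x.1, x.2, Finset.HasAntidiagonal.mem_antidiagonal.mp hx, left_ne_zero_of_mul hne,
    right_ne_zero_of_mul hne⟩

lemma coeff_mul_low_vanish {p q : MvPowerSeries (Fin n) K} {u v : ℝ}
    (hp : ∀ β ∈ supp K n p, u ≤ weight n a β)
    (hq : ∀ γ ∈ supp K n q, v < weight n a γ)
    {α : Fin n →₀ ℕ} (hα : weight n a α ≤ u + v) :
    MvPowerSeries.coeff α (p * q) = 0 := by
  refine coeff_mul_eq_zero_of ?_
  intro β γ hβγ
  by_contra hcon
  push_neg at hcon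
  have h1 := hp β hcon.1
  have h2 := hq γ hcon.2
  have : weight n a α = weight n a β + weight n a γ := by rw [← hβγ, weight_add]
  linarith

lemma supp_sub_initialForm {v : ℝ} {f : MvPowerSeries (Fin n) K} (hv : NuIs a v f) :
    ∀ γ ∈ supp K n (f - initialForm K n a f), v < weight n a γ := by
  intro γ hγ
  simp only [supp, Set.mem_setOf_eq, map_sub, coeff_initialForm hv] at hγ
  by_cases hw : weight n a γ = v
  · rw [if_pos hw, sub_self] at hγ; exact absurd rfl hγ
  · rw [if_neg hw, sub_zero] at hγ
    exact lt_of_le_of_ne (hv.2 γ hγ) (Ne.symm hw)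

lemma supp_initialForm_subset {v : ℝ} {f : MvPowerSeries (Fin n) K} (hv : NuIs a v f) :
    ∀ γ ∈ supp K n (initialForm K n a f), weight n a γ = v := by
  intro γ hγ
  exact ((mem_supp_initialForm hv).mp hγ).2

/-- Coefficients of `f*g` below level `u+v` agree with those of `in(f)*in(g)`. -/
lemma coeff_mul_eq_coeff_initialForm_mul {f g : MvPowerSeries (Fin n) K} {u v : ℝ}
    (hu : NuIs a u f) (hv : NuIs a v g) {α : Fin n →₀ ℕ}
    (hα : weight n a α ≤ u + v) :
    MvPowerSeries.coeff α (f * g) =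
      MvPowerSeries.coeff α (initialForm K n a f * initialForm K n a g) := by
  have key : f * g - initialForm K n a f * initialForm K n a g
      = f * (g - initialForm K n a g) + (f - initialForm K n a f) * initialForm K n a g := by
    ring
  have h1 : MvPowerSeries.coeff α (f * (g - initialForm K n a g)) = 0 :=
    coeff_mul_low_vanish hu.2 (supp_sub_initialForm hv) hα
  have h2 : MvPowerSeries.coeff α ((f - initialForm K n a f) * initialForm K n a g) = 0 := by
    refine coeff_mul_eq_zero_of ?_
    intro β γ hβγ
    by_contra hcon
    push_neg at hcon
    have hb := supp_sub_initialForm hu β hcon.1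
    have hg := supp_initialForm_subset hv γ hcon.2
    have : weight n a α = weight n a β + weight n a γ := by rw [← hβγ, weight_add]
    linarith
  have := congrArg (MvPowerSeries.coeff α) key
  rw [map_sub, map_add, h1, h2, add_zero] at this
  exact sub_eq_zero.mp this

lemma supp_initialForm_mul {f g : MvPowerSeries (Fin n) K} {u v : ℝ}
    (hu : NuIs a u f) (hv : NuIs a v g) {α : Fin n →₀ ℕ}
    (hα : MvPowerSeries.coeff α (initialForm K n a f * initialForm K n a g) ≠ 0) :
    weight n a α = u + v := by
  obtain ⟨β, γ, hβγ, h1, h2⟩ := exists_decomp_of_coeff_mul_ne_zero hα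
  have hb := supp_initialForm_subset hu β h1
  have hg := supp_initialForm_subset hv γ h2
  rw [← hβγ, weight_add, hb, hg]

end Aux3

section Aux4

variable {K : Type*} [Field K] {n : ℕ} {a : Fin n → ℝ}
  {r : (Fin n →₀ ℕ) → (Fin n →₀ ℕ) → Prop}

lemma rle_add (hr : IsWellOrder (Fin n →₀ ℕ) r)
    (hradd : ∀ α β γ : Fin n →₀ ℕ, r α β → r (α + γ) (β + γ))
    {β ef γ eg : Fin n →₀ ℕ} (h1 : β = ef ∨ r β ef) (h2 : γ = eg ∨ r γ eg) :
    β + γ = ef + eg ∨ r (β + γ) (ef + eg) := by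
  rcases h1 with rfl | h1
  · rcases h2 with rfl | h2
    · exact Or.inl rfl
    · refine Or.inr ?_
      have := hradd γ eg β h2
      rwa [add_comm γ β, add_comm eg β] at this
  · rcases h2 with rfl | h2
    · exact Or.inr (hradd β ef γ h1)
    · refine Or.inr ?_
      have ha1 : r (β + γ) (ef + γ) := hradd β ef γ h1
      have ha2 : r (ef + γ) (ef + eg) := by
        have := hradd γ eg ef h2
        rwa [add_comm γ ef, add_comm eg ef] at this
      exact (by haveI := hr; exact _root_.trans_of r ha1 ha2)

lemma decomp_eq_of_max (hr : IsWellOrder (Fin n →₀ ℕ) r)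
    (hradd : ∀ α β γ : Fin n →₀ ℕ, r α β → r (α + γ) (β + γ))
    {β ef γ eg : Fin n →₀ ℕ} (h1 : β = ef ∨ r β ef) (h2 : γ = eg ∨ r γ eg)
    (heq : β + γ = ef + eg) : β = ef ∧ γ = eg := by
  rcases h1 with rfl | h1
  · exact ⟨rfl, add_left_cancel heq⟩
  · exfalso
    have ha1 : r (β + γ) (ef + γ) := hradd β ef γ h1
    have ha2 : r (β + γ) (ef + eg) := by
      rcases h2 with rfl | h2
      · exact ha1
      · have hstep := hradd γ eg ef h2
        rw [add_comm γ ef, add_comm eg ef] at hstep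
        exact (by haveI := hr; exact _root_.trans_of r ha1 hstep)
    rw [heq] at ha2
    exact (hr.wf.asymmetric _ _ ha2) ha2

/-- Multiplicativity of initial forms. -/
lemma mul_spec (hr : IsWellOrder (Fin n →₀ ℕ) r)
    (hradd : ∀ α β γ : Fin n →₀ ℕ, r α β → r (α + γ) (β + γ)) (ha : ∀ i, 0 < a i)
    {f g : MvPowerSeries (Fin n) K} (hf : f ≠ 0) (hg : g ≠ 0)
    {u v : ℝ} (hu : NuIs a u f) (hv : NuIs a v g) :
    f * g ≠ 0 ∧ NuIs a (u + v) (f * g) ∧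
      initialForm K n a (f * g) = initialForm K n a f * initialForm K n a g ∧
      exponent K n r a (f * g) = exponent K n r a f + exponent K n r a g := by
  classical
  set ef := exponent K n r a f
  set eg := exponent K n r a g
  obtain ⟨hcf, hwf⟩ := exponent_mem hr ha hf hu
  obtain ⟨hcg, hwg⟩ := exponent_mem hr ha hg hv
  have hef_mem : ef ∈ supp K n (initialForm K n a f) := (exponent_spec hr ha hf).1
  have heg_mem : eg ∈ supp K n (initialForm K n a g) := (exponent_spec hr ha hg).1
  have hef_max := (exponent_spec hr ha hf).2
  have heg_max := (exponent_spec hr ha hg).2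
  -- the top coefficient of in f * in g
  have htop : MvPowerSeries.coeff (ef + eg) (initialForm K n a f * initialForm K n a g)
      = MvPowerSeries.coeff ef f * MvPowerSeries.coeff eg g := by
    rw [MvPowerSeries.coeff_mul]
    have hzero : ∀ x ∈ Finset.HasAntidiagonal.antidiagonal (ef + eg), x ≠ (ef, eg) →
        MvPowerSeries.coeff x.1 (initialForm K n a f) *
          MvPowerSeries.coeff x.2 (initialForm K n a g) = 0 := by
      rintro ⟨β, γ⟩ hmem hne
      have hadd : β + γ = ef + eg := Finset.HasAntidiagonal.mem_antidiagonal.mp hmem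
      by_contra hcon
      have hβ : β ∈ supp K n (initialForm K n a f) := left_ne_zero_of_mul hcon
      have hγ : γ ∈ supp K n (initialForm K n a g) := right_ne_zero_of_mul hcon
      obtain ⟨hβe, hγe⟩ := decomp_eq_of_max hr hradd (hef_max β hβ) (heg_max γ hγ) hadd
      exact hne (by rw [hβe, hγe])
    rw [Finset.sum_eq_single_of_mem (ef, eg) (Finset.HasAntidiagonal.mem_antidiagonal.mpr rfl) hzero]
    rw [coeff_initialForm hu, coeff_initialForm hv, if_pos hwf, if_pos hwg]
  have htopne : MvPowerSeries.coeff (ef + eg) (initialForm K n a f * initialForm K n a g) ≠ 0 := by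
    rw [htop]; exact mul_ne_zero hcf hcg
  have hwsum : weight n a (ef + eg) = u + v := by rw [weight_add, hwf, hwg]
  -- NuIs for the product
  have hNu : NuIs a (u + v) (f * g) := by
    constructor
    · refine ⟨ef + eg, ?_, hwsum⟩
      show MvPowerSeries.coeff (ef + eg) (f * g) ≠ 0
      rw [coeff_mul_eq_coeff_initialForm_mul hu hv (le_of_eq hwsum)]
      exact htopne
    · intro α hα
      by_contra hlt
      push_neg at hlt
      have h0 : MvPowerSeries.coeff α (f * g) = 0 := by
        rw [coeff_mul_eq_coeff_initialForm_mul hu hv hlt.le]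
        by_contra hne
        have := supp_initialForm_mul hu hv hne
        linarith
      exact hα h0
  have hfg : f * g ≠ 0 := by
    intro h0
    obtain ⟨α, hα, _⟩ := hNu.1
    rw [h0] at hα
    simp [supp] at hα
  -- initial form of the product
  have hin : initialForm K n a (f * g) = initialForm K n a f * initialForm K n a g := by
    ext γ
    rw [coeff_initialForm hNu]
    by_cases hw : weight n a γ = u + v
    · rw [if_pos hw]
      exact coeff_mul_eq_coeff_initialForm_mul hu hv hw.le
    · rw [if_neg hw]
      by_contra hne
      exact hw (supp_initialForm_mul hu hv fun hh => hne hh.symm)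
  refine ⟨hfg, hNu, hin, ?_⟩
  refine exponent_unique hr ?_ ?_
  · show MvPowerSeries.coeff (ef + eg) (initialForm K n a (f * g)) ≠ 0
    rw [hin]; exact htopne
  · intro γ hγ
    rw [hin] at hγ
    obtain ⟨β, δ, hβδ, h1, h2⟩ := exists_decomp_of_coeff_mul_ne_zero hγ
    rw [← hβδ]
    exact rle_add hr hradd (hef_max β h1) (heg_max δ h2)

end Aux4

section Aux5

variable {K : Type*} [Field K] {n : ℕ} {a : Fin n → ℝ}
  {r : (Fin n →₀ ℕ) → (Fin n →₀ ℕ) → Prop}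

/-- Total degree of an exponent. -/
def degOf (α : Fin n →₀ ℕ) : ℕ := ∑ i, α i

lemma degOf_add (α β : Fin n →₀ ℕ) : degOf (α + β) = degOf α + degOf β := by
  simp [degOf, Finsupp.add_apply, Finset.sum_add_distrib]

lemma degOf_eq_zero {α : Fin n →₀ ℕ} (h : degOf α = 0) : α = 0 := by
  ext i
  have := Finset.sum_eq_zero_iff.mp h i (Finset.mem_univ i)
  simpa using this

/-- The ideal of series with all coefficients of degree `< d` vanishing. -/
def lowVanish (K : Type*) [Field K] (n d : ℕ) : Ideal (MvPowerSeries (Fin n) K) where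
  carrier := {h | ∀ α : Fin n →₀ ℕ, degOf α < d → MvPowerSeries.coeff α h = 0}
  zero_mem' := fun α _ => map_zero _
  add_mem' := fun {p q} hp hq α hα => by rw [map_add, hp α hα, hq α hα, add_zero]
  smul_mem' := fun c p hp α hα => by
    show MvPowerSeries.coeff α (c * p) = 0
    refine coeff_mul_eq_zero_of ?_
    intro β γ hβγ
    right
    refine hp γ ?_
    have : degOf β + degOf γ = degOf α := by rw [← hβγ, degOf_add]
    omega

lemma mIdeal_le_lowVanish : mIdeal K n ≤ lowVanish K n 1 := by
  rw [mIdeal, Ideal.span_le]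
  rintro x ⟨i, rfl⟩
  intro α hα
  have hα0 : α = 0 := degOf_eq_zero (by omega)
  subst hα0
  rw [MvPowerSeries.coeff_zero_X]

lemma lowVanish_mul_le (d e : ℕ) :
    lowVanish K n d * lowVanish K n e ≤ lowVanish K n (d + e) := by
  rw [Ideal.mul_le]
  intro p hp q hq α hα
  refine coeff_mul_eq_zero_of ?_
  intro β γ hβγ
  have hdeg : degOf β + degOf γ = degOf α := by rw [← hβγ, degOf_add]
  by_cases hb : degOf β < d
  · exact Or.inl (hp β hb)
  · exact Or.inr (hq γ (by omega))

lemma mIdeal_pow_le (N : ℕ) : (mIdeal K n) ^ N ≤ lowVanish K n N := by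
  induction N with
  | zero => intro x _ α hα; omega
  | succ N ih =>
    calc (mIdeal K n) ^ (N + 1) = (mIdeal K n) ^ N * mIdeal K n := pow_succ _ _
    _ ≤ lowVanish K n N * lowVanish K n 1 := Ideal.mul_mono ih mIdeal_le_lowVanish
    _ ≤ lowVanish K n (N + 1) := lowVanish_mul_le N 1

lemma coeff_eq_zero_of_mem_mIdeal_pow {h : MvPowerSeries (Fin n) K} {N : ℕ}
    (hmem : h ∈ (mIdeal K n) ^ N) {α : Fin n →₀ ℕ} (hα : degOf α < N) :
    MvPowerSeries.coeff α h = 0 :=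
  mIdeal_pow_le N hmem α hα

/- closedAdjoin helper lemmas -/

lemma mem_closedAdjoin_iff {S : Set (MvPowerSeries (Fin n) K)} {f : MvPowerSeries (Fin n) K} :
    f ∈ closedAdjoin K n S ↔
      ∀ N : ℕ, ∃ g ∈ Algebra.adjoin K S, f - g ∈ (mIdeal K n) ^ N := Iff.rfl

lemma subset_closedAdjoin (S : Set (MvPowerSeries (Fin n) K)) :
    S ⊆ (closedAdjoin K n S : Set (MvPowerSeries (Fin n) K)) := by
  intro s hs
  intro N
  exact ⟨s, Algebra.subset_adjoin hs, by rw [sub_self]; exact zero_mem _⟩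

lemma adjoin_le_closedAdjoin (S : Set (MvPowerSeries (Fin n) K)) :
    Algebra.adjoin K S ≤ closedAdjoin K n S :=
  Algebra.adjoin_le (subset_closedAdjoin S)

lemma closedAdjoin_le {S T : Set (MvPowerSeries (Fin n) K)}
    (h : S ⊆ (closedAdjoin K n T : Set (MvPowerSeries (Fin n) K))) :
    closedAdjoin K n S ≤ closedAdjoin K n T := by
  intro f hf
  intro N
  obtain ⟨p, hp, hfp⟩ := hf N
  have hp' : p ∈ closedAdjoin K n T := Algebra.adjoin_le h hp
  obtain ⟨q, hq, hpq⟩ := hp' N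
  refine ⟨q, hq, ?_⟩
  have : f - q = (f - p) + (p - q) := by ring
  rw [this]
  exact add_mem hfp hpq

/-- Support of elements of a closed adjoin of monomials lies in the monoid generated by the
exponents. -/
lemma supp_subset_closure {T : Set (MvPowerSeries (Fin n) K)} {E : Set (Fin n →₀ ℕ)}
    (hT : ∀ t ∈ T, ∃ γ ∈ E, ∃ c : K, t = MvPowerSeries.monomial γ c)
    {f : MvPowerSeries (Fin n) K} (hf : f ∈ closedAdjoin K n T) :
    ∀ α : Fin n →₀ ℕ, MvPowerSeries.coeff α f ≠ 0 → α ∈ AddSubmonoid.closure E := by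
  classical
  set X : Subalgebra K (MvPowerSeries (Fin n) K) :=
    { carrier := {h | ∀ α : Fin n →₀ ℕ, MvPowerSeries.coeff α h ≠ 0 →
        α ∈ AddSubmonoid.closure E}
      algebraMap_mem' := by
        intro c α hα
        rw [MvPowerSeries.algebraMap_apply, MvPowerSeries.coeff_C] at hα
        by_cases h0 : α = 0
        · subst h0; exact zero_mem _
        · exact absurd (if_neg h0) hα
      add_mem' := by
        intro p q hp hq α hα
        rw [map_add] at hα
        by_cases h1 : MvPowerSeries.coeff α p ≠ 0
        · exact hp α h1
        · push_neg at h1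
          exact hq α (by rw [h1, zero_add] at hα; exact hα)
      mul_mem' := by
        intro p q hp hq α hα
        obtain ⟨β, γ, hβγ, h1, h2⟩ := exists_decomp_of_coeff_mul_ne_zero hα
        rw [← hβγ]
        exact add_mem (hp β h1) (hq γ h2) } with hX
  have hTX : T ⊆ (X : Set (MvPowerSeries (Fin n) K)) := by
    intro t ht
    obtain ⟨γ, hγ, c, rfl⟩ := hT t ht
    intro α hα
    rw [MvPowerSeries.coeff_monomial] at hα
    by_cases h0 : α = γ
    · subst h0; exact AddSubmonoid.subset_closure hγ
    · exact absurd (if_neg h0) hα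
  have hadj : Algebra.adjoin K T ≤ X := Algebra.adjoin_le hTX
  intro α hα
  obtain ⟨p, hp, hfp⟩ := hf (degOf α + 1)
  have hcoeff : MvPowerSeries.coeff α (f - p) = 0 :=
    coeff_eq_zero_of_mem_mIdeal_pow hfp (Nat.lt_succ_self _)
  rw [map_sub, sub_eq_zero] at hcoeff
  exact hadj hp α (by rw [← hcoeff]; exact hα)

/-- Monomials with exponents in the generated monoid lie in the closed adjoin. -/
lemma monomial_mem_closedAdjoin {T : Set (MvPowerSeries (Fin n) K)} {E : Set (Fin n →₀ ℕ)}
    (hE : ∀ γ ∈ E, ∃ c : K, c ≠ 0 ∧ MvPowerSeries.monomial γ c ∈ T) :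
    ∀ β ∈ AddSubmonoid.closure E,
      MvPowerSeries.monomial β (1 : K) ∈ closedAdjoin K n T := by
  intro β hβ
  induction hβ using AddSubmonoid.closure_induction with
  | mem γ hγ =>
    obtain ⟨c, hc, hmem⟩ := hE γ hγ
    have : MvPowerSeries.monomial γ (1 : K) = c⁻¹ • MvPowerSeries.monomial γ c := by
      rw [← map_smul, smul_eq_mul, inv_mul_cancel₀ hc]
    rw [this]
    exact Subalgebra.smul_mem _ (subset_closedAdjoin T hmem) _
  | zero =>
    rw [MvPowerSeries.monomial_zero_one]
    exact one_mem _
  | add β γ _ _ hβmem hγmem =>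
    have : MvPowerSeries.monomial (β + γ) (1 : K) =
        MvPowerSeries.monomial β (1 : K) * MvPowerSeries.monomial γ (1 : K) := by
      rw [MvPowerSeries.monomial_mul_monomial, one_mul]
    rw [this]
    exact mul_mem hβmem hγmem

end Aux5

section Aux6

variable {K : Type*} [Field K] {n : ℕ} {a : Fin n → ℝ}
  {r : (Fin n →₀ ℕ) → (Fin n →₀ ℕ) → Prop}

lemma nuIs_one : NuIs a (0 : ℝ) (1 : MvPowerSeries (Fin n) K) := by
  classical
  constructor
  · refine ⟨0, ?_, weight_zero⟩
    show MvPowerSeries.coeff 0 (1 : MvPowerSeries (Fin n) K) ≠ 0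
    rw [MvPowerSeries.coeff_zero_one]
    exact one_ne_zero
  · intro γ hγ
    show (0 : ℝ) ≤ weight n a γ
    have : γ = 0 := by
      by_contra h0
      exact hγ (by rw [MvPowerSeries.coeff_one, if_neg h0])
    rw [this, weight_zero]

lemma initialForm_one : initialForm K n a (1 : MvPowerSeries (Fin n) K) = 1 := by
  classical
  ext γ
  rw [coeff_initialForm (nuIs_one (a := a))]
  by_cases hw : weight n a γ = 0
  · rw [if_pos hw]
  · rw [if_neg hw, MvPowerSeries.coeff_one, if_neg (fun h0 => hw (by rw [h0, weight_zero])), eq_comm]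

/-- If the monomial `x^α` belongs to `in(A,a)`, then there is `h ∈ A` with
`in(h,a) = x^α`. -/
lemma exists_initialForm_eq_monomial (hr : IsWellOrder (Fin n →₀ ℕ) r)
    (hradd : ∀ α β γ : Fin n →₀ ℕ, r α β → r (α + γ) (β + γ)) (ha : ∀ i, 0 < a i)
    {A : Subalgebra K (MvPowerSeries (Fin n) K)} {α : Fin n →₀ ℕ}
    (hmem : MvPowerSeries.monomial α (1 : K) ∈
      inAlgebra K n a (A : Set (MvPowerSeries (Fin n) K))) :
    ∃ h, h ∈ A ∧ h ≠ 0 ∧ initialForm K n a h = MvPowerSeries.monomial α (1 : K) := by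
  classical
  set S : Set (MvPowerSeries (Fin n) K) :=
    {q | ∃ f ∈ (A : Set (MvPowerSeries (Fin n) K)), f ≠ 0 ∧ initialForm K n a f = q} with hS
  -- choice of precision
  have hWfin : ({γ : Fin n →₀ ℕ | weight n a γ ≤ weight n a α}).Finite :=
    finite_weight_le ha _
  set N : ℕ := hWfin.toFinset.sup degOf + 1 with hN
  have hNlt : ∀ γ : Fin n →₀ ℕ, weight n a γ ≤ weight n a α → degOf γ < N := by
    intro γ hγ
    have : degOf γ ≤ hWfin.toFinset.sup degOf :=
      Finset.le_sup (hWfin.mem_toFinset.mpr hγ)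
    omega
  obtain ⟨p, hp, hdiff⟩ := hmem N
  have hlow : ∀ γ : Fin n →₀ ℕ, weight n a γ ≤ weight n a α →
      MvPowerSeries.coeff γ p = MvPowerSeries.coeff γ (MvPowerSeries.monomial α (1 : K)) := by
    intro γ hγ
    have := coeff_eq_zero_of_mem_mIdeal_pow hdiff (hNlt γ hγ)
    rw [map_sub, sub_eq_zero] at this
    exact this.symm
  -- S is multiplicatively closed
  set Ssub : Submonoid (MvPowerSeries (Fin n) K) :=
    { carrier := S
      one_mem' := ⟨1, A.one_mem, one_ne_zero, initialForm_one⟩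
      mul_mem' := by
        rintro p' q' ⟨f, hfA, hf0, rfl⟩ ⟨g, hgA, hg0, rfl⟩
        obtain ⟨u, hu⟩ := nuIs_exists ha hf0
        obtain ⟨v, hv⟩ := nuIs_exists ha hg0
        obtain ⟨hne, _, hIF, _⟩ := mul_spec hr hradd ha hf0 hg0 hu hv
        exact ⟨f * g, mul_mem hfA hgA, hne, hIF⟩ } with hSsub
  have hclosure : (Submonoid.closure S : Set (MvPowerSeries (Fin n) K)) ⊆ S :=
    Submonoid.closure_le.mpr (le_refl (Ssub : Set (MvPowerSeries (Fin n) K)))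
  have hspan : p ∈ Submodule.span K S := by
    have h1 : p ∈ Submodule.span K (Submonoid.closure S : Set (MvPowerSeries (Fin n) K)) := by
      rw [← Algebra.adjoin_eq_span]
      exact hp
    exact Submodule.span_le.mpr
      (hclosure.trans Submodule.subset_span) h1
  obtain ⟨l, c, u, hsum⟩ := Submodule.mem_span_set'.mp hspan
  have hu : ∀ i : Fin l, ∃ hf, hf ∈ A ∧ hf ≠ 0 ∧ initialForm K n a hf = (u i : MvPowerSeries (Fin n) K) := by
    intro i
    obtain ⟨f, hfA, hf0, hif⟩ := (u i).2
    exact ⟨f, hfA, hf0, hif⟩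
  choose hh hhA hh0 hhin using hu
  choose vv hvv using fun i => nuIs_exists ha (hh0 i)
  set idx : Finset (Fin l) := Finset.univ.filter (fun i => vv i = weight n a α) with hidx
  set h : MvPowerSeries (Fin n) K := ∑ i ∈ idx, c i • hh i with hh_def
  have hmemA : h ∈ A := sum_mem fun i _ => A.smul_mem (hhA i) (c i)
  have hcoeff : ∀ γ : Fin n →₀ ℕ, MvPowerSeries.coeff γ h
      = ∑ i ∈ idx, c i * MvPowerSeries.coeff γ (hh i) := by
    intro γ
    rw [hh_def, map_sum]
    refine Finset.sum_congr rfl fun i _ => ?_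
    rw [map_smul, smul_eq_mul]
  have hlow2 : ∀ γ : Fin n →₀ ℕ, weight n a γ < weight n a α →
      MvPowerSeries.coeff γ h = 0 := by
    intro γ hγ
    rw [hcoeff]
    refine Finset.sum_eq_zero fun i hi => ?_
    have hvi : vv i = weight n a α := (Finset.mem_filter.mp hi).2
    have : MvPowerSeries.coeff γ (hh i) = 0 := by
      by_contra hne
      have := (hvv i).2 γ hne
      rw [hvi] at this
      linarith
    rw [this, mul_zero]
  have heqlevel : ∀ γ : Fin n →₀ ℕ, weight n a γ = weight n a α →
      MvPowerSeries.coeff γ h = MvPowerSeries.coeff γ (MvPowerSeries.monomial α (1 : K)) := by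
    intro γ hγ
    have hterm : ∀ i : Fin l, i ∈ idx →
        c i * MvPowerSeries.coeff γ (hh i) = c i * MvPowerSeries.coeff γ (u i : MvPowerSeries (Fin n) K) := by
      intro i hi
      have hvi : vv i = weight n a α := (Finset.mem_filter.mp hi).2
      rw [← hhin i, coeff_initialForm (hvv i), if_pos (by rw [hγ, hvi])]
    have hterm0 : ∀ i : Fin l, i ∉ idx →
        c i * MvPowerSeries.coeff γ (u i : MvPowerSeries (Fin n) K) = 0 := by
      intro i hi
      have hvi : ¬ vv i = weight n a α := by
        intro hcontra
        exact hi (Finset.mem_filter.mpr ⟨Finset.mem_univ i, hcontra⟩)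
      rw [← hhin i, coeff_initialForm (hvv i), if_neg (by rw [hγ]; exact fun hc => hvi hc.symm),
        mul_zero]
    calc MvPowerSeries.coeff γ h = ∑ i ∈ idx, c i * MvPowerSeries.coeff γ (hh i) := hcoeff γ
    _ = ∑ i ∈ idx, c i * MvPowerSeries.coeff γ (u i : MvPowerSeries (Fin n) K) :=
        Finset.sum_congr rfl hterm
    _ = ∑ i : Fin l, c i * MvPowerSeries.coeff γ (u i : MvPowerSeries (Fin n) K) := by
        refine Finset.sum_subset (Finset.subset_univ idx) ?_
        intro i _ hi
        exact hterm0 i hi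
    _ = MvPowerSeries.coeff γ p := by
        rw [← hsum, map_sum]
        refine Finset.sum_congr rfl fun i _ => ?_
        rw [map_smul, smul_eq_mul]
    _ = MvPowerSeries.coeff γ (MvPowerSeries.monomial α (1 : K)) := hlow γ hγ.le
  have hα1 : MvPowerSeries.coeff α h = 1 := by
    rw [heqlevel α rfl, MvPowerSeries.coeff_monomial_same]
  have hNu : NuIs a (weight n a α) h := by
    constructor
    · exact ⟨α, by show MvPowerSeries.coeff α h ≠ 0; rw [hα1]; exact one_ne_zero, rfl⟩
    · intro γ hγ
      by_contra hlt
      push_neg at hlt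
      exact hγ (hlow2 γ hlt)
  have hne : h ≠ 0 := by
    intro h0
    rw [h0, map_zero] at hα1
    exact one_ne_zero hα1.symm
  refine ⟨h, hmemA, hne, ?_⟩
  ext γ
  rw [coeff_initialForm hNu]
  by_cases hw : weight n a γ = weight n a α
  · rw [if_pos hw]
    exact heqlevel γ hw
  · rw [if_neg hw, MvPowerSeries.coeff_monomial,
      if_neg (fun h0 => hw (by rw [h0])), eq_comm]

end Aux6

section Aux7

variable {K : Type*} [Field K] {n : ℕ} {a : Fin n → ℝ}
  {r : (Fin n →₀ ℕ) → (Fin n →₀ ℕ) → Prop}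

lemma prod_exists (hr : IsWellOrder (Fin n →₀ ℕ) r)
    (hradd : ∀ α β γ : Fin n →₀ ℕ, r α β → r (α + γ) (β + γ)) (ha : ∀ i, 0 < a i)
    {A : Subalgebra K (MvPowerSeries (Fin n) K)} {m : ℕ} {g : Fin m → MvPowerSeries (Fin n) K}
    (hgA : ∀ i, g i ∈ A ∧ g i ≠ 0)
    (hmono : ∀ i, initialForm K n a (g i) =
      MvPowerSeries.monomial (exponent K n r a (g i)) (1 : K)) :
    ∀ β ∈ AddSubmonoid.closure (Set.range fun i => exponent K n r a (g i)),
      (∃ P, P ∈ A ∧ P ≠ 0 ∧ initialForm K n a P = MvPowerSeries.monomial β (1 : K)) ∧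
        MvPowerSeries.monomial β (1 : K) ∈
          Algebra.adjoin K (Set.range fun i => initialForm K n a (g i)) := by
  intro β hβ
  induction hβ using AddSubmonoid.closure_induction with
  | mem γ hγ =>
    obtain ⟨i, rfl⟩ := hγ
    constructor
    · exact ⟨g i, (hgA i).1, (hgA i).2, hmono i⟩
    · rw [← hmono i]
      exact Algebra.subset_adjoin ⟨i, rfl⟩
  | zero =>
    constructor
    · exact ⟨1, A.one_mem, one_ne_zero, by rw [initialForm_one, MvPowerSeries.monomial_zero_one]⟩
    · rw [MvPowerSeries.monomial_zero_one]
      exact one_mem _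
  | add β γ _ _ ihβ ihγ =>
    obtain ⟨⟨P, hPA, hP0, hPin⟩, hPm⟩ := ihβ
    obtain ⟨⟨Q, hQA, hQ0, hQin⟩, hQm⟩ := ihγ
    obtain ⟨u, hu⟩ := nuIs_exists ha hP0
    obtain ⟨v, hv⟩ := nuIs_exists ha hQ0
    obtain ⟨hne, _, hIF, _⟩ := mul_spec hr hradd ha hP0 hQ0 hu hv
    constructor
    · refine ⟨P * Q, mul_mem hPA hQA, hne, ?_⟩
      rw [hIF, hPin, hQin, MvPowerSeries.monomial_mul_monomial, one_mul]
    · have : MvPowerSeries.monomial (β + γ) (1 : K) =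
          MvPowerSeries.monomial β (1 : K) * MvPowerSeries.monomial γ (1 : K) := by
        rw [MvPowerSeries.monomial_mul_monomial, one_mul]
      rw [this]
      exact mul_mem hPm hQm

lemma key_initialForm_mem (hr : IsWellOrder (Fin n →₀ ℕ) r)
    (hradd : ∀ α β γ : Fin n →₀ ℕ, r α β → r (α + γ) (β + γ)) (ha : ∀ i, 0 < a i)
    {A : Subalgebra K (MvPowerSeries (Fin n) K)} {m : ℕ} {g : Fin m → MvPowerSeries (Fin n) K}
    (hgA : ∀ i, g i ∈ A ∧ g i ≠ 0)
    (hlead : leadAlgebra K n r a (A : Set (MvPowerSeries (Fin n) K)) =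
      closedAdjoin K n (Set.range fun i => leadMon K n r a (g i)))
    (hmono : ∀ i, initialForm K n a (g i) =
      MvPowerSeries.monomial (exponent K n r a (g i)) (1 : K)) :
    ∀ f, f ∈ A → f ≠ 0 → initialForm K n a f ∈
      Algebra.adjoin K (Set.range fun i => initialForm K n a (g i)) := by
  classical
  set B := Algebra.adjoin K (Set.range fun i => initialForm K n a (g i)) with hB
  have main : ∀ β : Fin n →₀ ℕ, ∀ f, f ∈ A → f ≠ 0 → exponent K n r a f = β →
      initialForm K n a f ∈ B := by
    have hwf := hr.wf
    refine fun β => hwf.induction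
      (C := fun β => ∀ f, f ∈ A → f ≠ 0 → exponent K n r a f = β → initialForm K n a f ∈ B)
      β ?_
    intro β ih f hfA hf0 hexp
    subst hexp
    obtain ⟨v, hv⟩ := nuIs_exists ha hf0
    obtain ⟨hcβ, hwβ⟩ := exponent_mem hr ha hf0 hv
    set β := exponent K n r a f with hβ_def
    -- β lies in the monoid generated by the exponents of the g i
    have hMf : leadMon K n r a f ∈
        closedAdjoin K n (Set.range fun i => leadMon K n r a (g i)) := by
      rw [← hlead]
      exact subset_closedAdjoin _ ⟨f, hfA, hf0, rfl⟩
    have hβmon : β ∈ AddSubmonoid.closure (Set.range fun i => exponent K n r a (g i)) := by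
      refine supp_subset_closure ?_ hMf β ?_
      · rintro t ⟨i, rfl⟩
        exact ⟨exponent K n r a (g i), ⟨i, rfl⟩,
          MvPowerSeries.coeff (exponent K n r a (g i)) (g i), rfl⟩
      · show MvPowerSeries.coeff β (leadMon K n r a f) ≠ 0
        rw [leadMon, MvPowerSeries.coeff_monomial_same]
        exact hcβ
    obtain ⟨⟨P, hPA, hP0, hPin⟩, hmon_mem⟩ := prod_exists hr hradd ha hgA hmono β hβmon
    set c := MvPowerSeries.coeff β f with hc_def
    by_cases hcase : initialForm K n a f = MvPowerSeries.monomial β c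
    · rw [hcase]
      have : MvPowerSeries.monomial β c = c • MvPowerSeries.monomial β (1 : K) := by
        rw [← map_smul, smul_eq_mul, mul_one]
      rw [this]
      exact Subalgebra.smul_mem _ hmon_mem c
    · obtain ⟨u, hu⟩ := nuIs_exists ha hP0
      have huv : u = v := by
        have hβP : β ∈ supp K n (initialForm K n a P) := by
          show MvPowerSeries.coeff β (initialForm K n a P) ≠ 0
          rw [hPin, MvPowerSeries.coeff_monomial_same]
          exact one_ne_zero
        have h1 : weight n a β = u := ((mem_supp_initialForm hu).mp hβP).2
        rw [← h1, hwβ]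
      rw [huv] at hu
      set f' := f - c • P with hf'_def
      have hcoeff' : ∀ γ : Fin n →₀ ℕ, MvPowerSeries.coeff γ f'
          = MvPowerSeries.coeff γ f - c * MvPowerSeries.coeff γ P := by
        intro γ
        rw [hf'_def, map_sub, map_smul, smul_eq_mul]
      have hlow' : ∀ γ : Fin n →₀ ℕ, weight n a γ < v → MvPowerSeries.coeff γ f' = 0 := by
        intro γ hγ
        have hf0' : MvPowerSeries.coeff γ f = 0 := by
          by_contra hne
          exact absurd (hv.2 γ hne) (not_le.mpr hγ)
        have hP0' : MvPowerSeries.coeff γ P = 0 := by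
          by_contra hne
          exact absurd (hu.2 γ hne) (not_le.mpr hγ)
        rw [hcoeff' γ, hf0', hP0', mul_zero, sub_zero]
      have hlevel : ∀ γ : Fin n →₀ ℕ, weight n a γ = v →
          MvPowerSeries.coeff γ f' =
            MvPowerSeries.coeff γ (initialForm K n a f) - c * (if γ = β then 1 else 0) := by
        intro γ hγ
        rw [hcoeff' γ, coeff_initialForm hv, if_pos hγ]
        congr 1
        have : MvPowerSeries.coeff γ P = MvPowerSeries.coeff γ (initialForm K n a P) := by
          rw [coeff_initialForm hu, if_pos hγ]
        rw [this, hPin, MvPowerSeries.coeff_monomial]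
      have hcβf : MvPowerSeries.coeff β (initialForm K n a f) = c := by
        rw [coeff_initialForm hv, if_pos hwβ]
      obtain ⟨γ₀, hγ₀ne, hγ₀w, hγ₀c⟩ :
          ∃ γ₀, γ₀ ≠ β ∧ weight n a γ₀ = v ∧
            MvPowerSeries.coeff γ₀ (initialForm K n a f) ≠ 0 := by
        by_contra hcon
        push_neg at hcon
        apply hcase
        ext γ
        rw [MvPowerSeries.coeff_monomial]
        by_cases hγβ : γ = β
        · subst hγβ; rw [if_pos rfl, hcβf]
        · rw [if_neg hγβ]
          by_contra hne
          have hγsupp : γ ∈ supp K n (initialForm K n a f) := hne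
          have hγw : weight n a γ = v := ((mem_supp_initialForm hv).mp hγsupp).2
          exact hne (hcon γ hγβ hγw)
      have hf'0 : f' ≠ 0 := by
        intro h0
        have := hlevel γ₀ hγ₀w
        rw [h0, map_zero, if_neg hγ₀ne, mul_zero, sub_zero] at this
        exact hγ₀c this.symm
      have hNu' : NuIs a v f' := by
        constructor
        · refine ⟨γ₀, ?_, hγ₀w⟩
          show MvPowerSeries.coeff γ₀ f' ≠ 0
          rw [hlevel γ₀ hγ₀w, if_neg hγ₀ne, mul_zero, sub_zero]
          exact hγ₀c
        · intro γ hγ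
          by_contra hlt
          push_neg at hlt
          exact hγ (hlow' γ hlt)
      have hin' : initialForm K n a f' =
          initialForm K n a f - c • MvPowerSeries.monomial β (1 : K) := by
        ext γ
        rw [coeff_initialForm hNu']
        by_cases hγw : weight n a γ = v
        · rw [if_pos hγw, hlevel γ hγw, map_sub, map_smul, smul_eq_mul,
            MvPowerSeries.coeff_monomial]
        · rw [if_neg hγw, map_sub, map_smul, smul_eq_mul]
          have h1 : MvPowerSeries.coeff γ (initialForm K n a f) = 0 := by
            rw [coeff_initialForm hv, if_neg hγw]
          have h2 : MvPowerSeries.coeff γ (MvPowerSeries.monomial β (1 : K)) = 0 := by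
            refine MvPowerSeries.coeff_monomial_ne ?_ _
            intro hγβ
            rw [hγβ] at hγw
            exact hγw hwβ
          rw [h1, h2, mul_zero, sub_zero]
      have hexp' : r (exponent K n r a f') β := by
        have hmem' := (exponent_spec hr ha hf'0).1
        have hne' : MvPowerSeries.coeff (exponent K n r a f') (initialForm K n a f') ≠ 0 :=
          hmem'
        rw [hin', map_sub, map_smul, smul_eq_mul] at hne'
        by_cases hcaseβ : exponent K n r a f' = β
        · exfalso
          rw [hcaseβ, hcβf, MvPowerSeries.coeff_monomial_same, mul_one, sub_self] at hne'
          exact hne' rfl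
        · rw [MvPowerSeries.coeff_monomial_ne hcaseβ, mul_zero, sub_zero] at hne'
          rcases (exponent_spec hr ha hf0).2 _ hne' with h | h
          · exact absurd h hcaseβ
          · exact h
      have hf'A : f' ∈ A := sub_mem hfA (A.smul_mem hPA c)
      have hIH : initialForm K n a f' ∈ B := ih (exponent K n r a f') hexp' f' hf'A hf'0 rfl
      have hfinal : initialForm K n a f =
          initialForm K n a f' + c • MvPowerSeries.monomial β (1 : K) := by
        rw [hin']; ring
      rw [hfinal]
      exact add_mem hIH (Subalgebra.smul_mem _ hmon_mem c)
  intro f hfA hf0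
  exact main (exponent K n r a f) f hfA hf0 rfl

end Aux7

section Aux8

variable {K : Type*} [Field K] {n : ℕ} {a : Fin n → ℝ}
  {r : (Fin n →₀ ℕ) → (Fin n →₀ ℕ) → Prop}

lemma initialForm_monomial_of_isMonomial (hr : IsWellOrder (Fin n →₀ ℕ) r)
    (ha : ∀ i, 0 < a i) {f : MvPowerSeries (Fin n) K} (hf : f ≠ 0)
    (hmonic : MvPowerSeries.coeff (exponent K n r a f) f = 1)
    (hI : IsMonomial K n (initialForm K n a f)) :
    initialForm K n a f = MvPowerSeries.monomial (exponent K n r a f) (1 : K) := by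
  obtain ⟨α, c, hc, heq⟩ := hI
  have hexp : exponent K n r a f = α := exponent_eq_of_initialForm_monomial hr hc heq
  obtain ⟨v, hv⟩ := nuIs_exists ha hf
  have h1 : MvPowerSeries.coeff α (initialForm K n a f) = c := by
    rw [heq, MvPowerSeries.coeff_monomial_same]
  rw [coeff_initialForm hv] at h1
  by_cases hw : weight n a α = v
  · rw [if_pos hw] at h1
    rw [hexp] at hmonic
    have hc1 : c = 1 := by rw [← h1, hmonic]
    rw [heq, hexp, hc1]
  · rw [if_neg hw] at h1
    exact absurd h1.symm hc

end Aux8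

/-- `in(A,a)` is multihomogeneous iff each `in(g_i,a)` is a monomial, where
`{g_1,…,g_r}` is an `a`-reduced canonical basis of `A`. -/
theorem multihomogeneous_iff
    (r : (Fin n →₀ ℕ) → (Fin n →₀ ℕ) → Prop) (hr : IsWellOrder (Fin n →₀ ℕ) r)
    (hradd : ∀ α β γ : Fin n →₀ ℕ, r α β → r (α + γ) (β + γ))
    (s : ℕ) (f : Fin s → MvPowerSeries (Fin n) K) (hf : ∀ i, f i ≠ 0)
    (A : Subalgebra K (MvPowerSeries (Fin n) K)) (hA : A = closedAdjoin K n (Set.range f))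
    (hlen : FiniteColength K n A)
    (a : Fin n → ℝ) (ha : ∀ i, 0 < a i)
    (m : ℕ) (g : Fin m → MvPowerSeries (Fin n) K)
    (hg : IsReducedCanonicalBasis K n r a A g) :
    (∃ T : Set (MvPowerSeries (Fin n) K), (∀ g' ∈ T, IsMonomial K n g') ∧
      inAlgebra K n a (A : Set (MvPowerSeries (Fin n) K)) = closedAdjoin K n T) ↔
    ∀ i, IsMonomial K n (initialForm K n a (g i)) := by
  classical
  obtain ⟨⟨⟨hgA, hlead⟩, hmin⟩, hmonic, hred⟩ := hg
  constructor
  · rintro ⟨T, hTmono, hEq⟩ i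
    obtain ⟨v, hv⟩ := nuIs_exists ha (hgA i).2
    set β := exponent K n r a (g i) with hβ
    have hclaim : ∀ α ∈ supp K n (initialForm K n a (g i)), α = β := by
      intro α hα
      by_contra hne
      have h1 : initialForm K n a (g i) ∈
          inAlgebra K n a (A : Set (MvPowerSeries (Fin n) K)) :=
        subset_closedAdjoin _ ⟨g i, (hgA i).1, (hgA i).2, rfl⟩
      rw [hEq] at h1
      set E : Set (Fin n →₀ ℕ) :=
        {γ | ∃ c : K, c ≠ 0 ∧ MvPowerSeries.monomial γ c ∈ T} with hE
      have hT' : ∀ t ∈ T, ∃ γ ∈ E, ∃ c : K, t = MvPowerSeries.monomial γ c := by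
        intro t ht
        obtain ⟨γ, c, hc, hteq⟩ := hTmono t ht
        exact ⟨γ, ⟨c, hc, hteq ▸ ht⟩, c, hteq⟩
      have hα_cl : α ∈ AddSubmonoid.closure E := supp_subset_closure hT' h1 α hα
      have h2 : MvPowerSeries.monomial α (1 : K) ∈ closedAdjoin K n T :=
        monomial_mem_closedAdjoin (fun γ hγ => hγ) α hα_cl
      rw [← hEq] at h2
      obtain ⟨h, hhA, hh0, hhin⟩ := exists_initialForm_eq_monomial hr hradd ha h2
      have hexp_h : exponent K n r a h = α :=
        exponent_eq_of_initialForm_monomial hr one_ne_zero hhin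
      obtain ⟨vh, hvh⟩ := nuIs_exists ha hh0
      have hcoeffh : MvPowerSeries.coeff α h = 1 := by
        have h3 : MvPowerSeries.coeff α (initialForm K n a h) = 1 := by
          rw [hhin, MvPowerSeries.coeff_monomial_same]
        rw [coeff_initialForm hvh] at h3
        by_cases hw : weight n a α = vh
        · rwa [if_pos hw] at h3
        · rw [if_neg hw] at h3
          exact absurd h3.symm one_ne_zero
      have hlm : leadMon K n r a h = MvPowerSeries.monomial α (1 : K) := by
        rw [leadMon, hexp_h, hcoeffh]
      have h4 : MvPowerSeries.monomial α (1 : K) ∈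
          closedAdjoin K n (Set.range fun j => leadMon K n r a (g j)) := by
        rw [← hlead, ← hlm]
        exact subset_closedAdjoin _ ⟨h, hhA, hh0, rfl⟩
      refine hred i α ?_ h4
      show MvPowerSeries.coeff α (g i - leadMon K n r a (g i)) ≠ 0
      rw [map_sub]
      have h5 : MvPowerSeries.coeff α (leadMon K n r a (g i)) = 0 := by
        rw [leadMon]
        exact MvPowerSeries.coeff_monomial_ne hne _
      rw [h5, sub_zero]
      exact ((mem_supp_initialForm hv).mp hα).1
    have hin_eq := initialForm_eq_monomial_of_supp_unique hv hclaim
    refine ⟨β, MvPowerSeries.coeff β (g i), ?_, hin_eq⟩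
    rw [hmonic i]
    exact one_ne_zero
  · intro hI
    have hmono : ∀ i, initialForm K n a (g i) =
        MvPowerSeries.monomial (exponent K n r a (g i)) (1 : K) :=
      fun i => initialForm_monomial_of_isMonomial hr ha (hgA i).2 (hmonic i) (hI i)
    refine ⟨Set.range fun i => initialForm K n a (g i), ?_, ?_⟩
    · rintro g' ⟨i, rfl⟩
      exact hI i
    · apply le_antisymm
      · apply closedAdjoin_le
        rintro q ⟨f', hf'A, hf'0, rfl⟩
        exact adjoin_le_closedAdjoin _
          (key_initialForm_mem hr hradd ha hgA hlead hmono f' hf'A hf'0)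
      · apply closedAdjoin_le
        rintro q ⟨i, rfl⟩
        exact subset_closedAdjoin _ ⟨g i, (hgA i).1, (hgA i).2, rfl⟩

end CanonicalFan
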